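/- Let φ: [0,∞) → [0,∞) be monotone decreasing and suppose there exist constants B₀ > 0, δ > 0 and s₀ ≥ 0 such that for all s ≥ s₀ and all r > 0 one has r * φ(s+r) ≤ B₀ * φ(s)^{1+δ}. Then φ(s) = 0 for all s ≥ s₀ + 2 B₀ φ(s₀)^δ / (1 - 2^{-δ}). -/
import Mathlib

noncomputable def dgSeq (φ : ℝ → ℝ) (B₀ δ s₀ : ℝ) : ℕ → ℝ
  | 0 => s₀
  | n+1 => dgSeq φ B₀ δ s₀ n + 2*B₀*(φ (dgSeq φ B₀ δ s₀ n))^δ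

theorem stmt3 (φ : ℝ → ℝ) (hpos : ∀ s, 0 ≤ φ s) (hmono : AntitoneOn φ (Set.Ici 0))
    (B₀ δ s₀ : ℝ) (hB₀ : 0 < B₀) (hδ : 0 < δ) (hs₀ : 0 ≤ s₀)
    (h : ∀ s, s₀ ≤ s → ∀ r, 0 < r → r * φ (s + r) ≤ B₀ * φ s ^ (1 + δ)) :
    ∀ s, s₀ + 2 * B₀ * φ s₀ ^ δ / (1 - (2 : ℝ) ^ (-δ)) ≤ s → φ s = 0 := by
  intro s hs
  set x : ℝ := (2 : ℝ) ^ (-δ) with hxdef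
  have hx0 : 0 < x := Real.rpow_pos_of_pos two_pos _
  have hx1 : x < 1 := Real.rpow_lt_one_of_one_lt_of_neg one_lt_two (neg_neg_of_pos hδ)
  set a := dgSeq φ B₀ δ s₀ with ha
  have hφ0 : 0 ≤ φ s₀ := hpos s₀
  set C : ℝ := 2 * B₀ * φ s₀ ^ δ with hC
  have hC0 : 0 ≤ C := by positivity
  have key : ∀ n : ℕ, s₀ ≤ a n ∧ a n ≤ s₀ + C * ∑ k ∈ Finset.range n, x ^ k ∧
      φ (a n) ≤ φ s₀ / 2 ^ n := by
    intro n
    induction n with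
    | zero => simp [ha, dgSeq]
    | succ n ih =>
      obtain ⟨h1, h2, h3⟩ := ih
      have han : a (n+1) = a n + 2*B₀*(φ (a n))^δ := rfl
      have hφn : 0 ≤ φ (a n) := hpos _
      -- bound on the step size
      have hstep : 2*B₀*(φ (a n))^δ ≤ C * x ^ n := by
        have h4 : (φ (a n))^δ ≤ (φ s₀ / 2 ^ n)^δ :=
          Real.rpow_le_rpow hφn h3 hδ.le
        have e1 : ((2:ℝ)^(-δ))^n = (2:ℝ)^(-(δ*n)) := by
          rw [← Real.rpow_natCast ((2:ℝ)^(-δ)) n, ← Real.rpow_mul (by norm_num)]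
          ring_nf
        have e2 : (((2:ℝ)^n : ℝ))^δ = (2:ℝ)^(δ*n) := by
          rw [← Real.rpow_natCast (2:ℝ) n, ← Real.rpow_mul (by norm_num)]
          ring_nf
        have h5 : (φ s₀ / 2 ^ n)^δ = φ s₀ ^ δ * x ^ n := by
          rw [hxdef, Real.div_rpow hφ0 (by positivity), e1, e2,
            Real.rpow_neg (by norm_num), div_eq_mul_inv]
        calc 2*B₀*(φ (a n))^δ ≤ 2*B₀*((φ s₀ / 2 ^ n)^δ) := by
              have : (0:ℝ) ≤ 2*B₀ := by positivity
              nlinarith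
          _ = C * x ^ n := by rw [h5, hC]; ring
      refine ⟨?_, ?_, ?_⟩
      · rw [han]; have : (0:ℝ) ≤ 2*B₀*(φ (a n))^δ := by positivity
        linarith
      · rw [han, Finset.sum_range_succ, mul_add]
        linarith
      · rcases eq_or_lt_of_le hφn with hz | hz
        · have hr0 : 2*B₀*(φ (a n))^δ = 0 := by
            rw [← hz, Real.zero_rpow hδ.ne']; ring
          rw [han, hr0, add_zero, ← hz]
          positivity
        · set r : ℝ := 2*B₀*(φ (a n))^δ with hr
          have hrpos : 0 < r := by
            have := Real.rpow_pos_of_pos hz δ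
            positivity
          have happ := h (a n) h1 r hrpos
          have hrhs : B₀ * φ (a n) ^ (1+δ) = r * (φ (a n) / 2) := by
            rw [Real.rpow_add hz, Real.rpow_one, hr]; ring
          rw [hrhs] at happ
          have h6 : φ (a n + r) ≤ φ (a n) / 2 := le_of_mul_le_mul_left
            (by linarith [happ]) hrpos
          calc φ (a (n+1)) = φ (a n + r) := by rw [han]
            _ ≤ φ (a n) / 2 := h6
            _ ≤ (φ s₀ / 2 ^ n) / 2 := by linarith
            _ = φ s₀ / 2 ^ (n+1) := by ring
  -- geometric sum bound: a n ≤ s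
  have hsum : ∀ n : ℕ, (∑ k ∈ Finset.range n, x ^ k) ≤ 1 / (1 - x) := by
    intro n
    have h1x : 0 < 1 - x := by linarith
    have hgs : (∑ k ∈ Finset.range n, x ^ k) = (1 - x ^ n) / (1 - x) := by
      rw [geom_sum_eq hx1.ne, div_eq_div_iff (by linarith) h1x.ne']
      ring
    rw [hgs, div_le_div_iff₀ h1x h1x]
    have : 0 ≤ x ^ n := by positivity
    nlinarith
  have han_le : ∀ n, a n ≤ s := by
    intro n
    obtain ⟨_, h2, _⟩ := key n
    have : C * ∑ k ∈ Finset.range n, x ^ k ≤ C * (1 / (1 - x)) :=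
      mul_le_mul_of_nonneg_left (hsum n) hC0
    have hM : C * (1 / (1-x)) = 2 * B₀ * φ s₀ ^ δ / (1 - x) := by rw [hC]; ring
    linarith [hs]
  have hφs : ∀ n : ℕ, φ s ≤ φ s₀ / 2 ^ n := by
    intro n
    obtain ⟨h1, _, h3⟩ := key n
    have hmem : a n ∈ Set.Ici (0:ℝ) := le_trans hs₀ h1
    have hsmem : s ∈ Set.Ici (0:ℝ) := le_trans hs₀ (le_trans h1 (han_le n))
    exact le_trans (hmono hmem hsmem (han_le n)) h3
  have htend : Filter.Tendsto (fun n : ℕ => φ s₀ / 2 ^ n) Filter.atTop (nhds 0) := by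
    simpa using (tendsto_pow_atTop_nhds_zero_of_lt_one (by norm_num : (0:ℝ) ≤ 1/2)
      (by norm_num : (1/2:ℝ) < 1)).const_mul (φ s₀) |>.congr (fun n => by
        rw [div_pow]; ring_nf)
  have : φ s ≤ 0 := ge_of_tendsto' htend hφs
  linarith [hpos s]
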